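/- With the setup of the symmetric case (previous context), P_s(x) is strictly decreasing in x for x > 0 when N ≥ 2 and q ∈ (0,1). -/

import Mathlib

open Finset

/-- The Erlang density with shape `k` and mean parameter `μ` (rate `1/μ`). -/
noncomputable def erlangPDF (k : ℕ) (μ x : ℝ) : ℝ :=
  if 0 ≤ x then x ^ (k - 1) * Real.exp (-x / μ) / (μ ^ k * (Nat.factorial (k - 1))) else 0

/-- The symmetric successful decoding probability
`P_s(x) = N*q*(1-q)^(N-1)*f_1(x) / ∑_{k=1}^N C(N,k)*q^k*(1-q)^(N-k)*f_k(x)`. -/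
noncomputable def Ps (N : ℕ) (q μ x : ℝ) : ℝ :=
  (N * q * (1 - q) ^ (N - 1) * erlangPDF 1 μ x) /
    (∑ k ∈ Finset.Icc 1 N, (N.choose k : ℝ) * q ^ k * (1 - q) ^ (N - k) * erlangPDF k μ x)

lemma Ps_eq (N : ℕ) (q μ : ℝ) (hμ : 0 < μ) {x : ℝ} (hx : 0 < x) :
    Ps N q μ x = (N * q * (1 - q) ^ (N - 1)) /
      (∑ k ∈ Finset.Icc 1 N, (N.choose k : ℝ) * q ^ k * (1 - q) ^ (N - k) *
        (x ^ (k - 1) / (μ ^ (k - 1) * (Nat.factorial (k - 1))))) := by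
  unfold Ps erlangPDF
  have hE : Real.exp (-x / μ) / μ ≠ 0 :=
    div_ne_zero (Real.exp_ne_zero _) hμ.ne'
  have hsum : ∀ k ∈ Finset.Icc 1 N,
      (N.choose k : ℝ) * q ^ k * (1 - q) ^ (N - k) *
        (if 0 ≤ x then x ^ (k - 1) * Real.exp (-x / μ) / (μ ^ k * (Nat.factorial (k - 1))) else 0)
      = (Real.exp (-x / μ) / μ) *
        ((N.choose k : ℝ) * q ^ k * (1 - q) ^ (N - k) *
          (x ^ (k - 1) / (μ ^ (k - 1) * (Nat.factorial (k - 1))))) := by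
    intro k hk
    simp only [Finset.mem_Icc] at hk
    rw [if_pos hx.le]
    have hk' : μ ^ k = μ * μ ^ (k - 1) := by
      rw [← pow_succ']
      congr 1
      omega
    have hf : ((Nat.factorial (k - 1) : ℝ)) ≠ 0 := by
      exact_mod_cast (Nat.factorial_pos _).ne'
    rw [hk']
    field_simp
  rw [Finset.sum_congr rfl hsum, ← Finset.mul_sum]
  rw [if_pos hx.le]
  simp only [pow_one, Nat.sub_self, pow_zero, Nat.factorial_zero, Nat.cast_one, mul_one, one_mul]
  rw [show (N : ℝ) * q * (1 - q) ^ (N - 1) * (Real.exp (-x / μ) / μ) =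
      (Real.exp (-x / μ) / μ) * ((N : ℝ) * q * (1 - q) ^ (N - 1)) by ring]
  rw [mul_div_mul_left _ _ hE]

/-- In the symmetric setting, `P_s(x)` is strictly decreasing in `x` on `(0, ∞)` when
`N ≥ 2` and `q ∈ (0,1)`. -/
theorem Ps_strictAntiOn (N : ℕ) (hN : 2 ≤ N) (q μ : ℝ) (hq : q ∈ Set.Ioo (0 : ℝ) 1)
    (hμ : 0 < μ) : StrictAntiOn (fun x => Ps N q μ x) (Set.Ioi 0) := by
  obtain ⟨hq0, hq1⟩ := hq
  have h1q : 0 < 1 - q := by linarith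
  intro a ha b hb hab
  simp only [Set.mem_Ioi] at ha hb
  simp only
  rw [Ps_eq N q μ hμ ha, Ps_eq N q μ hμ hb]
  have hA : 0 < (N : ℝ) * q * (1 - q) ^ (N - 1) := by
    have : (0 : ℝ) < N := by positivity
    positivity
  have hcoef : ∀ k ∈ Finset.Icc 1 N,
      (0 : ℝ) < (N.choose k : ℝ) * q ^ k * (1 - q) ^ (N - k) := by
    intro k hk
    simp only [Finset.mem_Icc] at hk
    have : 0 < N.choose k := Nat.choose_pos hk.2
    have : (0 : ℝ) < N.choose k := by exact_mod_cast this
    positivity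
  have hterm : ∀ (x : ℝ), 0 < x → ∀ k ∈ Finset.Icc 1 N,
      (0 : ℝ) < (N.choose k : ℝ) * q ^ k * (1 - q) ^ (N - k) *
        (x ^ (k - 1) / (μ ^ (k - 1) * (Nat.factorial (k - 1)))) := by
    intro x hx k hk
    have hc := hcoef k hk
    have hf : (0 : ℝ) < (Nat.factorial (k - 1) : ℝ) := by
      exact_mod_cast Nat.factorial_pos _
    positivity
  have hSa : 0 < ∑ k ∈ Finset.Icc 1 N, (N.choose k : ℝ) * q ^ k * (1 - q) ^ (N - k) *
      (a ^ (k - 1) / (μ ^ (k - 1) * (Nat.factorial (k - 1)))) := by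
    apply Finset.sum_pos (hterm a ha)
    exact ⟨1, Finset.mem_Icc.2 ⟨le_refl 1, by omega⟩⟩
  have hlt : ∑ k ∈ Finset.Icc 1 N, (N.choose k : ℝ) * q ^ k * (1 - q) ^ (N - k) *
      (a ^ (k - 1) / (μ ^ (k - 1) * (Nat.factorial (k - 1)))) <
      ∑ k ∈ Finset.Icc 1 N, (N.choose k : ℝ) * q ^ k * (1 - q) ^ (N - k) *
      (b ^ (k - 1) / (μ ^ (k - 1) * (Nat.factorial (k - 1)))) := by
    apply Finset.sum_lt_sum
    · intro k hk
      have hc := (hcoef k hk).le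
      have hf : (0 : ℝ) < (Nat.factorial (k - 1) : ℝ) := by
        exact_mod_cast Nat.factorial_pos _
      have hpow : a ^ (k - 1) ≤ b ^ (k - 1) := pow_le_pow_left₀ ha.le hab.le _
      exact mul_le_mul_of_nonneg_left
        (div_le_div_of_nonneg_right hpow (by positivity)) hc
    · refine ⟨2, Finset.mem_Icc.2 ⟨by omega, hN⟩, ?_⟩
      have hc := hcoef 2 (Finset.mem_Icc.2 ⟨by omega, hN⟩)
      have hf : (0 : ℝ) < (Nat.factorial (2 - 1) : ℝ) := by
        exact_mod_cast Nat.factorial_pos _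
      apply mul_lt_mul_of_pos_left _ hc
      have h1 : a ^ (2 - 1) < b ^ (2 - 1) := by simpa using hab
      have hd : (0:ℝ) < μ ^ (2 - 1) * (Nat.factorial (2 - 1)) := by positivity
      exact div_lt_div_of_pos_right h1 hd
  exact div_lt_div_of_pos_left hA hSa hlt
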